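/- Relaxed empirical optimization restores consistency in the two-point example: in the same setting (P((Y^L,Y^U)=(0,1)) = P((Y^L,Y^U)=(0,2)) = 1/2), if ψ_n > 0 satisfies √n ψ_n → ∞ and ψ_n → 0, and Ĉ is the shortest interval [0, b] with P_n(0, b) ≥ 1/2 − ψ_n, then P(Ĉ = [0,1]) → 1 as n → ∞. -/

import Mathlib

open MeasureTheory ProbabilityTheory Finset Filter

open scoped Classical in
/-- relaxed empirical optimization restores consistency in the two-point
example. With `P((Y^L,Y^U)=(0,1)) = P((Y^L,Y^U)=(0,2)) = 1/2`, if `ψₙ > 0`, `√n ψₙ → ∞`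
and `ψₙ → 0`, then the shortest interval `[0, b]` with `P_n(0, b) ≥ 1/2 − ψₙ`, namely
`Ĉ = [0, 1 + 1{P_n(0,1) < 1/2 − ψₙ}]`, satisfies `P(Ĉ = [0,1]) → 1`. -/
theorem relaxed_empirical_optimization_consistent_fixed_censoring
    {Ω : Type*} [MeasureSpace Ω] (P : Measure Ω) [IsProbabilityMeasure P]
    (YL YU : ℕ → Ω → ℝ) (hYL : ∀ i, Measurable (YL i)) (hYU : ∀ i, Measurable (YU i))
    (hindep : iIndepFun (fun i ω => (YL i ω, YU i ω)) P)
    (hlaw : ∀ i, P {ω | YL i ω = 0 ∧ YU i ω = 1} = 1 / 2 ∧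
                 P {ω | YL i ω = 0 ∧ YU i ω = 2} = 1 / 2)
    (ψ : ℕ → ℝ) (hψpos : ∀ n, 0 < ψ n)
    (hψrate : Tendsto (fun n : ℕ => Real.sqrt n * ψ n) atTop atTop)
    (hψ0 : Tendsto ψ atTop (nhds 0))
    (Chat : ℕ → Ω → Set ℝ)
    (hChat : ∀ n ω, Chat n ω = Set.Icc (0 : ℝ)
        (1 + if ((((Finset.range n).filter fun i =>
              (0 : ℝ) ≤ YL i ω ∧ YU i ω ≤ 1).card : ℝ) / n < 1 / 2 - ψ n) then 1 else 0)) :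
    Tendsto (fun n => (P {ω | Chat n ω = Set.Icc (0 : ℝ) 1}).toReal) atTop (nhds 1) := by
  classical
  set B : ℕ → Set Ω := fun i => {ω | 0 ≤ YL i ω ∧ YU i ω ≤ 1} with hBdef
  have hBmeas : ∀ i, MeasurableSet (B i) := fun i =>
    (measurableSet_le measurable_const (hYL i)).inter (measurableSet_le (hYU i) measurable_const)
  have hPB : ∀ i, P (B i) = 1 / 2 := by
    intro i
    obtain ⟨h1, h2⟩ := hlaw i
    have hE2meas : MeasurableSet {ω | YL i ω = 0 ∧ YU i ω = 2} :=
      ((hYL i) (measurableSet_singleton 0)).inter ((hYU i) (measurableSet_singleton 2))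
    have hle : 1 / 2 ≤ P (B i) := by
      rw [← h1]
      exact measure_mono fun ω hω => ⟨le_of_eq hω.1.symm, le_of_eq hω.2⟩
    have hge : P (B i) ≤ 1 / 2 := by
      have hsub : B i ⊆ {ω | YL i ω = 0 ∧ YU i ω = 2}ᶜ := by
        intro ω hω h2'
        have := hω.2
        rw [h2'.2] at this
        linarith
      calc P (B i) ≤ P {ω | YL i ω = 0 ∧ YU i ω = 2}ᶜ := measure_mono hsub
        _ = 1 - 1 / 2 := by rw [measure_compl hE2meas (measure_ne_top _ _), h2, measure_univ]
        _ = 1 / 2 := by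
          rw [ENNReal.sub_eq_of_eq_add (by norm_num)]
          exact (ENNReal.add_halves 1).symm
    exact le_antisymm hge hle
  set X : ℕ → Ω → ℝ := fun i => (B i).indicator fun _ => 1 with hXdef
  have hXmeas : ∀ i, Measurable (X i) := fun i => measurable_const.indicator (hBmeas i)
  have hXmem : ∀ i, MemLp (X i) 2 P := fun i =>
    memLp_indicator_const 2 (hBmeas i) 1 (Or.inr (measure_ne_top _ _))
  have hEX : ∀ i, P[X i] = 1 / 2 := by
    intro i
    rw [hXdef]
    rw [integral_indicator_const (1 : ℝ) (hBmeas i), measureReal_def, hPB i]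
    simp [ENNReal.toReal_div]
  have hXsq : ∀ i, X i ^ 2 = X i := by
    intro i
    funext ω
    simp only [Pi.pow_apply, hXdef, Set.indicator]
    split_ifs <;> simp
  have hvar : ∀ i, variance (X i) P = 1 / 4 := by
    intro i
    rw [variance_eq_sub (hXmem i), hXsq i, hEX i]
    norm_num
  have hXindep : ∀ i j, i ≠ j → IndepFun (X i) (X j) P := by
    intro i j hij
    have h := hindep.indepFun hij
    have hset : MeasurableSet {p : ℝ × ℝ | 0 ≤ p.1 ∧ p.2 ≤ 1} :=
      (measurableSet_le measurable_const measurable_fst).inter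
        (measurableSet_le measurable_snd measurable_const)
    have hf : Measurable fun p : ℝ × ℝ =>
        ({p : ℝ × ℝ | 0 ≤ p.1 ∧ p.2 ≤ 1}.indicator (fun _ => (1 : ℝ)) p) :=
      measurable_const.indicator hset
    have hcomp : ∀ k, X k = (fun p : ℝ × ℝ =>
        ({p : ℝ × ℝ | 0 ≤ p.1 ∧ p.2 ≤ 1}.indicator (fun _ => (1 : ℝ)) p)) ∘
        (fun ω => (YL k ω, YU k ω)) := by
      intro k
      funext ω
      simp only [hXdef, Function.comp_apply, Set.indicator, Set.mem_setOf_eq, hBdef]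
    rw [hcomp i, hcomp j]
    exact h.comp hf hf
  have hSmem : ∀ n, MemLp (∑ i ∈ range n, X i) 2 P := fun n =>
    memLp_finset_sum' _ fun i _ => hXmem i
  have hvarS : ∀ n, variance (∑ i ∈ range n, X i) P = n * (1 / 4) := by
    intro n
    rw [IndepFun.variance_sum (fun i _ => hXmem i)
      (fun i _ j _ hij => hXindep i j hij)]
    simp [hvar, Finset.sum_const, card_range, nsmul_eq_mul]
  have hES : ∀ n : ℕ, P[∑ i ∈ range n, X i] = (n : ℝ) * (1 / 2) := by
    intro n
    simp only [Finset.sum_apply]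
    rw [integral_finset_sum _ fun i _ => (hXmem i).integrable one_le_two]
    simp [hEX, Finset.sum_const, card_range, nsmul_eq_mul]
  have hcard : ∀ n ω, (((range n).filter fun i => (0 : ℝ) ≤ YL i ω ∧ YU i ω ≤ 1).card : ℝ)
      = ∑ i ∈ range n, X i ω := by
    intro n ω
    rw [Finset.card_filter]
    push_cast
    refine Finset.sum_congr rfl fun i _ => ?_
    simp only [hXdef, Set.indicator, Set.mem_setOf_eq, hBdef]
  set A : ℕ → Set Ω := fun n => {ω |
      (((range n).filter fun i => (0 : ℝ) ≤ YL i ω ∧ YU i ω ≤ 1).card : ℝ) / n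
        < 1 / 2 - ψ n} with hAdef
  have hAmeas : ∀ n, MeasurableSet (A n) := by
    intro n
    have hg : Measurable fun ω =>
        (((range n).filter fun i => (0 : ℝ) ≤ YL i ω ∧ YU i ω ≤ 1).card : ℝ) / n := by
      have : (fun ω => (((range n).filter fun i =>
          (0 : ℝ) ≤ YL i ω ∧ YU i ω ≤ 1).card : ℝ) / n)
          = fun ω => (∑ i ∈ range n, X i ω) / n := by
        funext ω; rw [hcard]
      rw [this]
      exact (Finset.measurable_sum _ fun i _ => hXmeas i).div_const _
    exact measurableSet_lt hg measurable_const
  have hsetEq : ∀ n, {ω | Chat n ω = Set.Icc (0 : ℝ) 1} = (A n)ᶜ := by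
    intro n
    ext ω
    simp only [Set.mem_setOf_eq, Set.mem_compl_iff, hChat, hAdef]
    by_cases h : (((range n).filter fun i =>
        (0 : ℝ) ≤ YL i ω ∧ YU i ω ≤ 1).card : ℝ) / n < 1 / 2 - ψ n
    · rw [if_pos h]
      refine iff_of_false (fun hIcc => ?_) (not_not_intro h)
      have h2 : (2 : ℝ) ∈ Set.Icc (0 : ℝ) (1 + 1) := by norm_num
      rw [hIcc] at h2
      exact absurd h2.2 (by norm_num)
    · rw [if_neg h]
      rw [add_zero]
      exact iff_of_true rfl h
  -- Chebyshev bound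
  have key : ∀ n, 1 ≤ n → (P (A n)).toReal ≤ 1 / (4 * (Real.sqrt n * ψ n) ^ 2) := by
    intro n hn
    have hnpos : (0 : ℝ) < n := by exact_mod_cast hn
    have hcpos : (0 : ℝ) < n * ψ n := mul_pos hnpos (hψpos n)
    have hsub : A n ⊆ {ω | (n : ℝ) * ψ n ≤ |(∑ i ∈ range n, X i) ω - P[∑ i ∈ range n, X i]|} := by
      intro ω hω
      simp only [hAdef, Set.mem_setOf_eq] at hω
      rw [hcard n ω, div_lt_iff₀ hnpos] at hω
      have hS : (∑ i ∈ range n, X i) ω = ∑ i ∈ range n, X i ω := by simp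
      rw [Set.mem_setOf_eq, hES n, hS]
      have : ∑ i ∈ range n, X i ω - n * (1 / 2 : ℝ) ≤ -(n * ψ n) := by nlinarith
      exact le_abs.mpr (Or.inr (by linarith))
    have hcheb := meas_ge_le_variance_div_sq (μ := P) (hSmem n) hcpos
    have hle : P (A n) ≤ ENNReal.ofReal (variance (∑ i ∈ range n, X i) P / ((n : ℝ) * ψ n) ^ 2) :=
      le_trans (measure_mono hsub) hcheb
    have hbEq : variance (∑ i ∈ range n, X i) P / ((n : ℝ) * ψ n) ^ 2
        = 1 / (4 * (Real.sqrt n * ψ n) ^ 2) := by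
      rw [hvarS n]
      have hs : Real.sqrt n ^ 2 = (n : ℝ) := Real.sq_sqrt (by positivity)
      rw [mul_pow, mul_pow, hs]
      have hn0 : (n : ℝ) ≠ 0 := hnpos.ne'
      have hp0 : ψ n ≠ 0 := (hψpos n).ne'
      field_simp
    rw [hbEq] at hle
    exact ENNReal.toReal_le_of_le_ofReal (by positivity) hle
  have htend0 : Tendsto (fun n => (P (A n)).toReal) atTop (nhds 0) := by
    have hb : Tendsto (fun n : ℕ => 4 * (Real.sqrt n * ψ n) ^ 2) atTop atTop := by
      have h2 : Tendsto (fun n : ℕ => (Real.sqrt n * ψ n) ^ 2) atTop atTop := by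
        have := hψrate.atTop_mul_atTop₀ hψrate
        simpa [pow_two] using this
      exact h2.const_mul_atTop (by norm_num)
    have hinv : Tendsto (fun n : ℕ => 1 / (4 * (Real.sqrt n * ψ n) ^ 2)) atTop (nhds 0) := by
      simpa only [one_div, Pi.inv_apply, Pi.inv_def] using hb.inv_tendsto_atTop
    refine squeeze_zero' (Eventually.of_forall fun n => ENNReal.toReal_nonneg) ?_ hinv
    filter_upwards [eventually_ge_atTop 1] with n hn
    exact key n hn
  have hfinal : ∀ n, (P {ω | Chat n ω = Set.Icc (0 : ℝ) 1}).toReal = 1 - (P (A n)).toReal := by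
    intro n
    rw [hsetEq n, measure_compl (hAmeas n) (measure_ne_top _ _), measure_univ,
      ENNReal.toReal_sub_of_le prob_le_one (by norm_num), ENNReal.toReal_one]
  have hgoal : Tendsto (fun n => 1 - (P (A n)).toReal) atTop (nhds 1) := by
    have := tendsto_const_nhds (x := (1 : ℝ)) (f := atTop (α := ℕ)) |>.sub htend0
    simpa using this
  exact hgoal.congr fun n => (hfinal n).symm
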